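/- Let X1,...,Xn (n ≥ 2) be discrete random variables with finite ranges. The variables are mutually statistically independent if and only if for every subset I ⊆ {1,...,n} with |I| ≥ 2, the multivariate mutual information I_{|I|}((X_i)_{i∈I}) equals zero. In particular the vanishing of these 2^n - n - 1 quantities is equivalent to independence. -/

import Mathlib

open Finset

noncomputable def negMulLog2 (x : ℝ) : ℝ := -(x * Real.logb 2 x)

noncomputable def prob {Ω α : Type*} [Fintype Ω] [DecidableEq α]
    (p : Ω → ℝ) (X : Ω → α) (x : α) : ℝ :=
  ∑ ω : Ω, if X ω = x then p ω else 0

noncomputable def ent {Ω α : Type*} [Fintype Ω] [Fintype α] [DecidableEq α]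
    (p : Ω → ℝ) (X : Ω → α) : ℝ :=
  ∑ x : α, negMulLog2 (prob p X x)

noncomputable def condp {Ω γ : Type*} [Fintype Ω] [DecidableEq γ]
    (p : Ω → ℝ) (Z : Ω → γ) (z : γ) : Ω → ℝ :=
  fun ω => if Z ω = z then p ω / prob p Z z else 0

noncomputable def I2 {Ω α β : Type*} [Fintype Ω] [Fintype α] [DecidableEq α]
    [Fintype β] [DecidableEq β]
    (p : Ω → ℝ) (X : Ω → α) (Y : Ω → β) : ℝ :=
  ent p X + ent p Y - ent p (fun ω => (X ω, Y ω))

noncomputable def condI2 {Ω α β γ : Type*} [Fintype Ω] [Fintype α] [DecidableEq α]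
    [Fintype β] [DecidableEq β] [Fintype γ] [DecidableEq γ]
    (p : Ω → ℝ) (X : Ω → α) (Y : Ω → β) (Z : Ω → γ) : ℝ :=
  ∑ z : γ, prob p Z z * I2 (condp p Z z) X Y

noncomputable def I3 {Ω α β γ : Type*} [Fintype Ω] [Fintype α] [DecidableEq α]
    [Fintype β] [DecidableEq β] [Fintype γ] [DecidableEq γ]
    (p : Ω → ℝ) (X : Ω → α) (Y : Ω → β) (Z : Ω → γ) : ℝ :=
  ent p X + ent p Y + ent p Z
    - ent p (fun ω => (X ω, Y ω)) - ent p (fun ω => (X ω, Z ω))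
    - ent p (fun ω => (Y ω, Z ω))
    + ent p (fun ω => (X ω, Y ω, Z ω))

noncomputable def jointEnt {Ω ι : Type*} [Fintype Ω] [Fintype ι] [DecidableEq ι]
    {α : ι → Type*} [∀ i, Fintype (α i)] [∀ i, DecidableEq (α i)]
    (p : Ω → ℝ) (X : ∀ i, Ω → α i) (J : Finset ι) : ℝ :=
  ent p (fun ω => (fun i : J => X i.1 ω))

noncomputable def Imulti {Ω ι : Type*} [Fintype Ω] [Fintype ι] [DecidableEq ι]
    {α : ι → Type*} [∀ i, Fintype (α i)] [∀ i, DecidableEq (α i)]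
    (p : Ω → ℝ) (X : ∀ i, Ω → α i) (S : Finset ι) : ℝ :=
  ∑ J ∈ S.powerset, if J = ∅ then 0 else (-1 : ℝ) ^ (J.card + 1) * jointEnt p X J

section basics
variable {Ω α β : Type*} [Fintype Ω] [DecidableEq α] {p : Ω → ℝ} {X : Ω → α}

lemma negMulLog2_zero : negMulLog2 0 = 0 := by simp [negMulLog2]

lemma negMulLog2_one : negMulLog2 1 = 0 := by simp [negMulLog2]

lemma negMulLog2_mul (a b : ℝ) :
    negMulLog2 (a * b) = a * negMulLog2 b + b * negMulLog2 a := by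
  rcases eq_or_ne a 0 with rfl | ha
  · simp [negMulLog2]
  rcases eq_or_ne b 0 with rfl | hb
  · simp [negMulLog2]
  simp only [negMulLog2, Real.logb, Real.log_mul ha hb]
  field_simp
  ring

lemma prob_nonneg (hp : ∀ ω, 0 ≤ p ω) (x : α) : 0 ≤ prob p X x := by
  refine Finset.sum_nonneg fun ω _ => ?_
  split
  · exact hp ω
  · exact le_rfl

lemma sum_prob [Fintype α] (hs : ∑ ω, p ω = 1) : ∑ x, prob p X x = 1 := by
  unfold prob
  rw [Finset.sum_comm]
  simpa using hs

lemma prob_map [Fintype α] [DecidableEq β] (g : α → β) (y : β) :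
    prob p (fun ω => g (X ω)) y = ∑ x, if g x = y then prob p X x else 0 := by
  unfold prob
  symm
  have h1 : ∀ x : α, (if g x = y then ∑ ω : Ω, if X ω = x then p ω else 0 else 0)
      = ∑ ω : Ω, (if g x = y then (if X ω = x then p ω else 0) else 0) := by
    intro x; split_ifs <;> simp
  rw [Finset.sum_congr rfl fun x _ => h1 x, Finset.sum_comm]
  refine Finset.sum_congr rfl fun ω _ => ?_
  simp only []
  have : ∀ x : α, (if g x = y then if X ω = x then p ω else 0 else 0)
      = (if X ω = x then (if g x = y then p ω else 0) else 0) := by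
    intro x; split_ifs <;> rfl
  rw [Finset.sum_congr rfl fun x _ => this x]
  rw [Finset.sum_ite_eq Finset.univ (X ω) (fun x => if g x = y then p ω else 0)]
  simp

lemma prob_comp_bij [Fintype α] [DecidableEq β] {g : α → β} (hg : Function.Bijective g)
    (x : α) : prob p (fun ω => g (X ω)) (g x) = prob p X x := by
  rw [prob_map]
  simp only [hg.injective.eq_iff]
  simp

lemma ent_comp_bij [Fintype α] [Fintype β] [DecidableEq β] {g : α → β}
    (hg : Function.Bijective g) : ent p (fun ω => g (X ω)) = ent p X := by
  rw [ent, ← (Equiv.ofBijective g hg).sum_comp (fun y => negMulLog2 (prob p (fun ω => g (X ω)) y))]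
  refine Finset.sum_congr rfl fun x _ => ?_
  rw [show (Equiv.ofBijective g hg) x = g x from rfl, prob_comp_bij hg]

lemma prob_fst_pair [Fintype β] [DecidableEq β] (Y : Ω → β) (x : α) :
    prob p X x = ∑ y, prob p (fun ω => (X ω, Y ω)) (x, y) := by
  simp only [prob]
  rw [Finset.sum_comm]
  refine Finset.sum_congr rfl fun ω _ => ?_
  rcases eq_or_ne (X ω) x with h | h
  · rw [Finset.sum_eq_single (Y ω)]
    · simp [h]
    · intro b _ hb
      simp only [Prod.mk.injEq, h, true_and, ite_eq_right_iff]
      exact fun h2 => absurd h2.symm hb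
    · simp
  · simp [Prod.ext_iff, h]

end basics

section gibbs
variable {ι : Type*} [Fintype ι]

lemma gibbs_pointwise {a b : ℝ} (ha : 0 ≤ a) (hb : 0 ≤ b) (hab : a ≠ 0 → b ≠ 0) :
    a * Real.log b - a * Real.log a - (b - a) ≤ 0 ∧
      (a ≠ b → a * Real.log b - a * Real.log a - (b - a) < 0) := by
  rcases eq_or_ne a 0 with rfl | ha0
  · constructor
    · simpa using hb
    · intro hne
      have hb0 : b ≠ 0 := fun h => hne h.symm
      simpa using lt_of_le_of_ne hb (Ne.symm hb0)
  · have hapos : 0 < a := lt_of_le_of_ne ha (Ne.symm ha0)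
    have hbpos : 0 < b := lt_of_le_of_ne hb (Ne.symm (hab ha0))
    have key : Real.log (b / a) ≤ b / a - 1 := Real.log_le_sub_one_of_pos (by positivity)
    have hlog : Real.log b - Real.log a = Real.log (b / a) := (Real.log_div hbpos.ne' ha0).symm
    constructor
    · have := mul_le_mul_of_nonneg_left key ha
      rw [← hlog] at this
      have h2 : a * (b / a - 1) = b - a := by field_simp
      nlinarith [this]
    · intro hne
      have key' : Real.log (b / a) < b / a - 1 := by
        refine Real.log_lt_sub_one_of_pos (by positivity) ?_
        intro h
        exact hne (by field_simp at h; linarith)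
      have := mul_lt_mul_of_pos_left key' hapos
      rw [← hlog] at this
      have h2 : a * (b / a - 1) = b - a := by field_simp
      nlinarith [this]

lemma gibbs (P Q : ι → ℝ) (hP : ∀ i, 0 ≤ P i) (hQ : ∀ i, 0 ≤ Q i)
    (hsP : ∑ i, P i = 1) (hsQ : ∑ i, Q i = 1) (hac : ∀ i, P i ≠ 0 → Q i ≠ 0) :
    ∑ i, P i * Real.log (Q i) ≤ ∑ i, P i * Real.log (P i) ∧
      (∑ i, P i * Real.log (Q i) = ∑ i, P i * Real.log (P i) → P = Q) := by
  set D : ι → ℝ := fun i => P i * Real.log (P i) - P i * Real.log (Q i) + (Q i - P i) with hD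
  have hDnn : ∀ i, 0 ≤ D i := by
    intro i
    have := (gibbs_pointwise (hP i) (hQ i) (hac i)).1
    simp only [hD]; linarith
  have hsum : ∑ i, D i = ∑ i, P i * Real.log (P i) - ∑ i, P i * Real.log (Q i) := by
    simp only [hD, Finset.sum_add_distrib, Finset.sum_sub_distrib, hsP, hsQ]
    ring
  constructor
  · have : 0 ≤ ∑ i, D i := Finset.sum_nonneg fun i _ => hDnn i
    linarith [hsum ▸ this]
  · intro heq
    have hz : ∑ i, D i = 0 := by rw [hsum, heq]; ring
    have hall : ∀ i ∈ Finset.univ, D i = 0 :=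
      (Finset.sum_eq_zero_iff_of_nonneg fun i _ => hDnn i).mp hz
    funext i
    by_contra hne
    have := (gibbs_pointwise (hP i) (hQ i) (hac i)).2 hne
    have h0 := hall i (Finset.mem_univ i)
    simp only [hD] at h0
    linarith

end gibbs

section pair
variable {Ω α β : Type*} [Fintype Ω] [Fintype α] [DecidableEq α] [Fintype β] [DecidableEq β]
  {p : Ω → ℝ} (X : Ω → α) (Y : Ω → β)

lemma prob_snd_pair (y : β) :
    prob p Y y = ∑ x, prob p (fun ω => (X ω, Y ω)) (x, y) := by
  rw [prob_fst_pair (p := p) (X := Y) (Y := X) y]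
  refine Finset.sum_congr rfl fun x _ => ?_
  have := (prob_comp_bij (p := p) (X := fun ω => (X ω, Y ω))
    (g := Prod.swap) (Equiv.prodComm α β).bijective (x, y)).symm
  simpa [Prod.swap] using this.symm

lemma ent_pair_of_indep (hs : ∑ ω, p ω = 1)
    (h : ∀ x y, prob p (fun ω => (X ω, Y ω)) (x, y) = prob p X x * prob p Y y) :
    ent p (fun ω => (X ω, Y ω)) = ent p X + ent p Y := by
  rw [ent, Fintype.sum_prod_type]
  have : ∀ x y : _, negMulLog2 (prob p (fun ω => (X ω, Y ω)) (x, y))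
      = prob p X x * negMulLog2 (prob p Y y) + prob p Y y * negMulLog2 (prob p X x) := by
    intro x y; rw [h, negMulLog2_mul]
  simp only [this, Finset.sum_add_distrib, ← Finset.mul_sum, ← Finset.sum_mul]
  rw [sum_prob hs, sum_prob hs]
  simp only [ent, one_mul]
  ring

lemma indep_pair_of_I2_eq_zero (hp : ∀ ω, 0 ≤ p ω) (hs : ∑ ω, p ω = 1)
    (h : I2 p X Y = 0) :
    ∀ x y, prob p (fun ω => (X ω, Y ω)) (x, y) = prob p X x * prob p Y y := by
  classical
  set P : α × β → ℝ := fun z => prob p (fun ω => (X ω, Y ω)) z with hPdef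
  set Q : α × β → ℝ := fun z => prob p X z.1 * prob p Y z.2 with hQdef
  have hPnn : ∀ z, 0 ≤ P z := fun z => prob_nonneg hp z
  have hQnn : ∀ z, 0 ≤ Q z := fun z =>
    mul_nonneg (prob_nonneg hp _) (prob_nonneg hp _)
  have hsP : ∑ z, P z = 1 := sum_prob hs
  have hsQ : ∑ z, Q z = 1 := by
    rw [hQdef]
    rw [Fintype.sum_prod_type]
    simp only [← Finset.sum_mul, ← Finset.mul_sum]
    rw [sum_prob hs, sum_prob hs]; norm_num
  have hPX : ∀ z : α × β, P z ≤ prob p X z.1 := by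
    intro z
    rw [prob_fst_pair (p := p) (X := X) Y z.1]
    exact Finset.single_le_sum (fun y _ => hPnn (z.1, y)) (Finset.mem_univ z.2)
  have hPY : ∀ z : α × β, P z ≤ prob p Y z.2 := by
    intro z
    rw [prob_snd_pair X Y z.2]
    exact Finset.single_le_sum (fun x _ => hPnn (x, z.2)) (Finset.mem_univ z.1)
  have hac : ∀ z, P z ≠ 0 → Q z ≠ 0 := by
    intro z hz
    have hzpos : 0 < P z := lt_of_le_of_ne (hPnn z) (Ne.symm hz)
    have h1 : 0 < prob p X z.1 := lt_of_lt_of_le hzpos (hPX z)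
    have h2 : 0 < prob p Y z.2 := lt_of_lt_of_le hzpos (hPY z)
    exact (mul_pos h1 h2).ne'
  -- key identity
  have hentX : ent p X = -∑ z : α × β, P z * Real.logb 2 (prob p X z.1) := by
    have h1 : ∀ x : α, negMulLog2 (prob p X x)
        = -∑ y : β, P (x, y) * Real.logb 2 (prob p X x) := by
      intro x
      rw [← Finset.sum_mul, ← prob_fst_pair (p := p) (X := X) Y x, negMulLog2]
    rw [ent, Finset.sum_congr rfl fun x _ => h1 x]
    simp only [Fintype.sum_prod_type]
    rw [Finset.sum_neg_distrib]
  have hentY : ent p Y = -∑ z : α × β, P z * Real.logb 2 (prob p Y z.2) := by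
    have h1 : ∀ y : β, negMulLog2 (prob p Y y)
        = -∑ x : α, P (x, y) * Real.logb 2 (prob p Y y) := by
      intro y
      rw [← Finset.sum_mul, ← prob_snd_pair (p := p) X Y y, negMulLog2]
    rw [ent, Finset.sum_congr rfl fun y _ => h1 y]
    simp only [Fintype.sum_prod_type_right]
    rw [Finset.sum_neg_distrib]
  have hentXY : ent p (fun ω => (X ω, Y ω)) = -∑ z : α × β, P z * Real.logb 2 (P z) := by
    rw [ent]
    simp only [negMulLog2, hPdef]
    rw [Finset.sum_neg_distrib]
  have hlogQ : ∀ z : α × β, P z * Real.logb 2 (Q z)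
      = P z * Real.logb 2 (prob p X z.1) + P z * Real.logb 2 (prob p Y z.2) := by
    intro z
    rcases eq_or_ne (P z) 0 with h0 | h0
    · simp [h0]
    · have hzpos : 0 < P z := lt_of_le_of_ne (hPnn z) (Ne.symm h0)
      have h1 : prob p X z.1 ≠ 0 := (lt_of_lt_of_le hzpos (hPX z)).ne'
      have h2 : prob p Y z.2 ≠ 0 := (lt_of_lt_of_le hzpos (hPY z)).ne'
      rw [hQdef]
      simp only []
      rw [Real.logb, Real.log_mul h1 h2, Real.logb, Real.logb]
      field_simp
  have hkey : I2 p X Y = ∑ z : α × β, (P z * Real.logb 2 (P z) - P z * Real.logb 2 (Q z)) := by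
    rw [I2, hentX, hentY, hentXY]
    have e : ∀ z : α × β, P z * Real.logb 2 (P z) - P z * Real.logb 2 (Q z)
        = P z * Real.logb 2 (P z) - P z * Real.logb 2 (prob p X z.1)
          - P z * Real.logb 2 (prob p Y z.2) := fun z => by rw [hlogQ z]; ring
    rw [Finset.sum_congr rfl fun z _ => e z]
    simp only [Finset.sum_sub_distrib]
    ring
  have hlog2 : Real.log 2 ≠ 0 := by
    have : (1:ℝ) < 2 := one_lt_two
    exact (Real.log_pos this).ne'
  have hgibbs := gibbs P Q hPnn hQnn hsP hsQ hac
  have heq : ∑ z, P z * Real.log (Q z) = ∑ z, P z * Real.log (P z) := by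
    have h1 : ∑ z : α × β, (P z * Real.log (P z) - P z * Real.log (Q z)) = 0 := by
      have h2 : ∀ z : α × β, P z * Real.logb 2 (P z) - P z * Real.logb 2 (Q z)
          = (P z * Real.log (P z) - P z * Real.log (Q z)) / Real.log 2 := by
        intro z; rw [Real.logb, Real.logb]; field_simp
      have h3 := hkey
      rw [Finset.sum_congr rfl fun z _ => h2 z, ← Finset.sum_div] at h3
      rw [h] at h3
      rcases div_eq_zero_iff.mp h3.symm with h4 | h4
      · exact h4
      · exact absurd h4 hlog2
    rw [Finset.sum_sub_distrib] at h1
    linarith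
  have hPQ : P = Q := hgibbs.2 heq
  intro x y
  have := congrFun hPQ (x, y)
  simpa [hPdef, hQdef] using this

end pair

section tuple
variable {Ω ι : Type*} [Fintype Ω] [Fintype ι] [DecidableEq ι]
  {α : ι → Type*} [∀ i, Fintype (α i)] [∀ i, DecidableEq (α i)]

/-- The joint tuple map. -/
def tup (X : ∀ i, Ω → α i) (J : Finset ι) : Ω → ((i : J) → α i.1) :=
  fun ω i => X i.1 ω

lemma jointEnt_eq_ent_tup (p : Ω → ℝ) (X : ∀ i, Ω → α i) (J : Finset ι) :
    jointEnt p X J = ent p (tup X J) := rfl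

/-- Splitting an insert-indexed tuple as a pair. -/
def insertEquiv (a : ι) (K : Finset ι) (ha : a ∉ K) :
    ((i : (insert a K : Finset ι)) → α i.1) ≃ α a × ((i : K) → α i.1) where
  toFun h := (h ⟨a, Finset.mem_insert_self a K⟩, fun i => h ⟨i.1, Finset.mem_insert_of_mem i.2⟩)
  invFun x := fun i =>
    if hi : i.1 ∈ K then x.2 ⟨i.1, hi⟩
    else cast (congrArg α (by
      rcases Finset.mem_insert.mp i.2 with h' | h'
      · exact h'
      · exact absurd h' hi)).symm x.1
  left_inv h := by
    funext i
    rcases i with ⟨v, hv⟩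
    by_cases hi : v ∈ K
    · simp [hi]
    · have hva : v = a := by
        rcases Finset.mem_insert.mp hv with h' | h'
        · exact h'
        · exact absurd h' hi
      subst hva
      simp [hi]
  right_inv x := by
    rcases x with ⟨xa, xk⟩
    refine Prod.ext ?_ ?_
    · simp [ha]
    · funext i
      simp [i.2]

lemma insertEquiv_comp_tup (X : ∀ i, Ω → α i) (a : ι) (K : Finset ι) (ha : a ∉ K) :
    (fun ω => (insertEquiv a K ha) (tup X (insert a K) ω))
      = fun ω => (X a ω, tup X K ω) := rfl

lemma ent_tup_insert (p : Ω → ℝ) (X : ∀ i, Ω → α i) (a : ι) (K : Finset ι) (ha : a ∉ K) :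
    ent p (tup X (insert a K)) = ent p (fun ω => (X a ω, tup X K ω)) := by
  rw [← insertEquiv_comp_tup X a K ha]
  exact (ent_comp_bij (insertEquiv a K ha).bijective).symm

lemma prob_pair_tup_insert (p : Ω → ℝ) (X : ∀ i, Ω → α i) (a : ι) (K : Finset ι)
    (ha : a ∉ K) (x : α a) (f : (i : K) → α i.1) :
    prob p (fun ω => (X a ω, tup X K ω)) (x, f)
      = prob p (tup X (insert a K)) ((insertEquiv a K ha).symm (x, f)) := by
  have := prob_comp_bij (p := p) (X := tup X (insert a K))
    (g := ⇑(insertEquiv a K ha)) (insertEquiv a K ha).bijective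
    ((insertEquiv a K ha).symm (x, f))
  rw [Equiv.apply_symm_apply] at this
  rw [← insertEquiv_comp_tup X a K ha]
  exact this

lemma prob_tup_insert (p : Ω → ℝ) (X : ∀ i, Ω → α i) (a : ι) (K : Finset ι)
    (ha : a ∉ K) (h : (i : (insert a K : Finset ι)) → α i.1) :
    prob p (tup X (insert a K)) h
      = prob p (fun ω => (X a ω, tup X K ω)) ((insertEquiv a K ha) h) :=
  (prob_comp_bij (p := p) (X := tup X (insert a K))
    (g := ⇑(insertEquiv a K ha)) (insertEquiv a K ha).bijective h).symm

/-- Singleton tuples. -/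
def singletonEquiv (a : ι) : ((i : ({a} : Finset ι)) → α i.1) ≃ α a where
  toFun f := f ⟨a, Finset.mem_singleton_self a⟩
  invFun x := fun i => cast (congrArg α (Finset.mem_singleton.mp i.2)).symm x
  left_inv f := by
    funext i
    rcases i with ⟨v, hv⟩
    have : v = a := Finset.mem_singleton.mp hv
    subst this
    simp
  right_inv x := by simp

lemma ent_tup_singleton (p : Ω → ℝ) (X : ∀ i, Ω → α i) (a : ι) :
    ent p (tup X {a}) = ent p (X a) := by
  have := ent_comp_bij (p := p) (X := tup X {a})
    (g := ⇑(singletonEquiv a)) (singletonEquiv a).bijective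
  rw [← this]
  rfl

lemma prob_tup_singleton (p : Ω → ℝ) (X : ∀ i, Ω → α i) (a : ι)
    (f : (i : ({a} : Finset ι)) → α i.1) :
    prob p (tup X {a}) f = prob p (X a) (f ⟨a, Finset.mem_singleton_self a⟩) := by
  have := (prob_comp_bij (p := p) (X := tup X {a})
    (g := ⇑(singletonEquiv a)) (singletonEquiv a).bijective f).symm
  rw [this]
  rfl

lemma prob_tup_empty (p : Ω → ℝ) (hs : ∑ ω, p ω = 1) (X : ∀ i, Ω → α i)
    (f : (i : (∅ : Finset ι)) → α i.1) :
    prob p (tup X ∅) f = 1 := by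
  rw [prob]
  have : ∀ ω : Ω, tup X (∅ : Finset ι) ω = f := by
    intro ω; funext i; exact absurd i.2 (Finset.notMem_empty i.1)
  simp [this, hs]

lemma ent_tup_empty (p : Ω → ℝ) (hs : ∑ ω, p ω = 1) (X : ∀ i, Ω → α i) :
    ent p (tup X ∅) = 0 := by
  haveI : Unique ((i : (∅ : Finset ι)) → α i.1) :=
    ⟨⟨fun i => absurd i.2 (Finset.notMem_empty i.1)⟩,
      fun f => funext fun i => absurd i.2 (Finset.notMem_empty i.1)⟩
  rw [ent, Fintype.sum_unique, prob_tup_empty p hs X, negMulLog2_one]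

lemma prod_subtype_insert {M : Type*} [CommMonoid M] (a : ι) (K : Finset ι) (ha : a ∉ K)
    (F : (i : (insert a K : Finset ι)) → M) :
    ∏ i : (insert a K : Finset ι), F i
      = F ⟨a, Finset.mem_insert_self a K⟩
        * ∏ i : K, F ⟨i.1, Finset.mem_insert_of_mem i.2⟩ := by
  rw [Finset.prod_coe_sort_eq_attach, Finset.attach_insert, Finset.prod_insert, Finset.prod_image]
  · rw [Finset.prod_coe_sort_eq_attach]
  · intro x _ y _ hxy
    exact Subtype.ext (by simpa using congrArg Subtype.val hxy)
  · intro hmem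
    rcases Finset.mem_image.mp hmem with ⟨x, _, hx⟩
    have hxa : x.1 = a := by simpa using congrArg Subtype.val hx
    exact ha (hxa ▸ x.2)

end tuple

section comb
variable {ι : Type*} [DecidableEq ι]

lemma sum_pow_neg_one_real {T : Finset ι} (hT : T.Nonempty) :
    ∑ K ∈ T.powerset, (-1 : ℝ) ^ K.card = 0 := by
  have := Finset.sum_powerset_neg_one_pow_card_of_nonempty (x := T) hT
  have h2 : ((∑ K ∈ T.powerset, (-1 : ℤ) ^ K.card : ℤ) : ℝ)
      = ∑ K ∈ T.powerset, (-1 : ℝ) ^ K.card := by push_cast; rfl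
  rw [← h2, this]; norm_num

lemma alt_sum_powerset (g : ι → ℝ) (S : Finset ι) (hS : 2 ≤ S.card) :
    ∑ J ∈ S.powerset,
      (if J = ∅ then 0 else (-1 : ℝ) ^ (J.card + 1) * ∑ i ∈ J, g i) = 0 := by
  have step1 : ∀ J ∈ S.powerset,
      (if J = ∅ then (0:ℝ) else (-1 : ℝ) ^ (J.card + 1) * ∑ i ∈ J, g i)
        = (-1 : ℝ) ^ (J.card + 1) * ∑ i ∈ S, (if i ∈ J then g i else 0) := by
    intro J hJ
    have hsub : J ⊆ S := Finset.mem_powerset.mp hJ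
    have : ∑ i ∈ J, g i = ∑ i ∈ S, (if i ∈ J then g i else 0) := by
      rw [Finset.sum_ite_mem, Finset.inter_eq_right.mpr hsub]
    rcases eq_or_ne J ∅ with rfl | hne
    · simp
    · rw [if_neg hne, this]
  rw [Finset.sum_congr rfl step1]
  simp only [Finset.mul_sum]
  rw [Finset.sum_comm]
  refine Finset.sum_eq_zero fun i hi => ?_
  have hiS : i ∈ S := hi
  -- inner sum over J
  have hrw : S = insert i (S.erase i) := (Finset.insert_erase hiS).symm
  rw [hrw] -- caution: rewrites S everywhere in goal
  rw [Finset.sum_powerset_insert (Finset.notMem_erase i S)]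
  have hfirst : ∑ J ∈ (S.erase i).powerset,
      (-1 : ℝ) ^ (J.card + 1) * (if i ∈ J then g i else 0) = 0 := by
    refine Finset.sum_eq_zero fun J hJ => ?_
    have : i ∉ J := fun hiJ =>
      Finset.notMem_erase i S (Finset.mem_powerset.mp hJ hiJ)
    simp [this]
  rw [hfirst, zero_add]
  have hsecond : ∀ J ∈ (S.erase i).powerset,
      (-1 : ℝ) ^ ((insert i J).card + 1) * (if i ∈ insert i J then g i else 0)
        = g i * (-1 : ℝ) ^ J.card := by
    intro J hJ
    have hiJ : i ∉ J := fun h =>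
      Finset.notMem_erase i S (Finset.mem_powerset.mp hJ h)
    rw [Finset.card_insert_of_notMem hiJ, if_pos (Finset.mem_insert_self i J)]
    ring
  rw [Finset.sum_congr rfl hsecond]
  rw [← Finset.mul_sum, sum_pow_neg_one_real]
  · ring
  · rw [← Finset.card_pos]
    have : 1 ≤ S.card - 1 := by omega
    calc 1 ≤ S.card - 1 := this
    _ = (S.erase i).card := (Finset.card_erase_of_mem hiS).symm
end comb

section main
variable {Ω ι : Type*} [Fintype Ω] [Fintype ι] [DecidableEq ι]
  {α : ι → Type*} [∀ i, Fintype (α i)] [∀ i, DecidableEq (α i)]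

/-- IndepFactorization of the joint law on an index set `J`. -/
def IndepFact (p : Ω → ℝ) (X : ∀ i, Ω → α i) (J : Finset ι) : Prop :=
  ∀ f : (i : J) → α i.1, prob p (tup X J) f = ∏ i : J, prob p (X i.1) (f i)

lemma insertEquiv_symm_apply_self (a : ι) (K : Finset ι) (ha : a ∉ K)
    (x : α a) (f : (i : K) → α i.1) :
    (insertEquiv a K ha).symm (x, f) ⟨a, Finset.mem_insert_self a K⟩ = x := by
  simp only [insertEquiv, Equiv.coe_fn_symm_mk]
  rw [dif_neg ha]
  exact cast_eq_iff_heq.mpr HEq.rfl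

lemma insertEquiv_symm_apply_mem (a : ι) (K : Finset ι) (ha : a ∉ K)
    (x : α a) (f : (i : K) → α i.1) (i : K) :
    (insertEquiv a K ha).symm (x, f) ⟨i.1, Finset.mem_insert_of_mem i.2⟩ = f i := by
  simp only [insertEquiv, Equiv.coe_fn_symm_mk]
  rw [dif_pos i.2]

lemma prob_pair_of_fact_insert (p : Ω → ℝ) (X : ∀ i, Ω → α i) (a : ι) (K : Finset ι)
    (ha : a ∉ K) (hfI : IndepFact p X (insert a K)) (hfK : IndepFact p X K)
    (x : α a) (f : (i : K) → α i.1) :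
    prob p (fun ω => (X a ω, tup X K ω)) (x, f)
      = prob p (X a) x * prob p (tup X K) f := by
  rw [prob_pair_tup_insert p X a K ha x f, hfI]
  rw [prod_subtype_insert a K ha
    (fun i => prob p (X i.1) ((insertEquiv a K ha).symm (x, f) i))]
  rw [insertEquiv_symm_apply_self a K ha x f]
  rw [Finset.prod_congr rfl fun i _ => by
    rw [insertEquiv_symm_apply_mem a K ha x f i]]
  rw [hfK f]

/-- Downward step: factorization at `insert a K` implies it at `K`. -/
lemma fact_of_fact_insert (p : Ω → ℝ) (hs : ∑ ω, p ω = 1) (X : ∀ i, Ω → α i)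
    (a : ι) (K : Finset ι) (ha : a ∉ K)
    (hfI : IndepFact p X (insert a K)) : IndepFact p X K := by
  intro f
  rw [prob_snd_pair (p := p) (X a) (tup X K) f]
  have hterm : ∀ x : α a, prob p (fun ω => (X a ω, tup X K ω)) (x, f)
      = prob p (X a) x * ∏ i : K, prob p (X i.1) (f i) := by
    intro x
    rw [prob_pair_tup_insert p X a K ha x f, hfI]
    rw [prod_subtype_insert a K ha
      (fun i => prob p (X i.1) ((insertEquiv a K ha).symm (x, f) i))]
    rw [insertEquiv_symm_apply_self a K ha x f]
    rw [Finset.prod_congr rfl fun i _ => by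
      rw [insertEquiv_symm_apply_mem a K ha x f i]]
  rw [Finset.sum_congr rfl fun x _ => hterm x, ← Finset.sum_mul, sum_prob hs, one_mul]

lemma fact_empty (p : Ω → ℝ) (hs : ∑ ω, p ω = 1) (X : ∀ i, Ω → α i) :
    IndepFact p X ∅ := by
  intro f
  rw [prob_tup_empty p hs X f]
  haveI : IsEmpty ((∅ : Finset ι) : Type _) := ⟨fun i => Finset.notMem_empty i.1 i.2⟩
  simp

/-- Independence gives additivity of entropy over tuples. -/
lemma ent_tup_eq_sum (p : Ω → ℝ) (hs : ∑ ω, p ω = 1) (X : ∀ i, Ω → α i)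
    (hfact : ∀ K : Finset ι, IndepFact p X K) (J : Finset ι) :
    ent p (tup X J) = ∑ i ∈ J, ent p (X i) := by
  induction J using Finset.induction with
  | empty => rw [ent_tup_empty p hs X, Finset.sum_empty]
  | insert a K ha IH =>
    rw [ent_tup_insert p X a K ha, Finset.sum_insert ha, ← IH]
    exact ent_pair_of_indep (X a) (tup X K) hs
      (fun x f => prob_pair_of_fact_insert p X a K ha (hfact _) (hfact _) x f)

/-- Vanishing interaction informations give additivity of entropy. -/
lemma ent_of_Imulti (p : Ω → ℝ) (hs : ∑ ω, p ω = 1) (X : ∀ i, Ω → α i)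
    (h : ∀ S : Finset ι, 2 ≤ S.card → Imulti p X S = 0) (J : Finset ι) :
    ent p (tup X J) = ∑ i ∈ J, ent p (X i) := by
  induction J using Finset.strongInduction with
  | _ J IH =>
    rcases Nat.lt_or_ge J.card 2 with hc | hc
    · interval_cases h : J.card
      · rw [Finset.card_eq_zero.mp h, ent_tup_empty p hs X, Finset.sum_empty]
      · obtain ⟨a, rfl⟩ := Finset.card_eq_one.mp h
        rw [ent_tup_singleton p X a, Finset.sum_singleton]
    · set g : ι → ℝ := fun i => ent p (X i) with hg
      have h0 := h J hc
      rw [Imulti] at h0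
      have halt := alt_sum_powerset g J hc
      have hJne : J ≠ ∅ := by
        intro hJe; rw [hJe] at hc; simp at hc
      have hsplit1 : (if J = ∅ then (0:ℝ) else (-1:ℝ) ^ (J.card+1) * jointEnt p X J)
          + ∑ J' ∈ J.powerset.erase J,
            (if J' = ∅ then (0:ℝ) else (-1:ℝ) ^ (J'.card+1) * jointEnt p X J') = 0 := by
        exact (Finset.add_sum_erase _ _ (Finset.mem_powerset_self J)).trans h0
      have hsplit2 : (if J = ∅ then (0:ℝ) else (-1:ℝ) ^ (J.card+1) * ∑ i ∈ J, g i)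
          + ∑ J' ∈ J.powerset.erase J,
            (if J' = ∅ then (0:ℝ) else (-1:ℝ) ^ (J'.card+1) * ∑ i ∈ J', g i) = 0 := by
        exact (Finset.add_sum_erase _ _ (Finset.mem_powerset_self J)).trans halt
      have hrest : ∑ J' ∈ J.powerset.erase J,
          (if J' = ∅ then (0:ℝ) else (-1:ℝ) ^ (J'.card+1) * jointEnt p X J')
          = ∑ J' ∈ J.powerset.erase J,
          (if J' = ∅ then (0:ℝ) else (-1:ℝ) ^ (J'.card+1) * ∑ i ∈ J', g i) := by
        refine Finset.sum_congr rfl fun J' hJ' => ?_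
        rcases Finset.mem_erase.mp hJ' with ⟨hne, hmem⟩
        have hss : J' ⊂ J :=
          lt_of_le_of_ne (Finset.mem_powerset.mp hmem) hne
        rw [jointEnt_eq_ent_tup, IH J' hss]
      rw [if_neg hJne] at hsplit1 hsplit2
      rw [hrest] at hsplit1
      have hkey : (-1:ℝ) ^ (J.card+1) * jointEnt p X J
          = (-1:ℝ) ^ (J.card+1) * ∑ i ∈ J, g i := by linarith
      have hne : ((-1:ℝ) ^ (J.card+1)) ≠ 0 :=
        pow_ne_zero _ (by norm_num : (-1:ℝ) ≠ 0)
      have := mul_left_cancel₀ hne hkey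
      rw [jointEnt_eq_ent_tup] at this
      exact this

/-- Additivity of entropy gives the full factorization. -/
lemma fact_of_ent (p : Ω → ℝ) (hp : ∀ ω, 0 ≤ p ω) (hs : ∑ ω, p ω = 1)
    (X : ∀ i, Ω → α i)
    (hent : ∀ J : Finset ι, ent p (tup X J) = ∑ i ∈ J, ent p (X i)) :
    ∀ J : Finset ι, IndepFact p X J := by
  intro J
  induction J using Finset.strongInduction with
  | _ J IH =>
    rcases J.eq_empty_or_nonempty with rfl | ⟨a, haJ⟩
    · exact fact_empty p hs X
    · set K := J.erase a with hK
      have ha : a ∉ K := Finset.notMem_erase a J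
      have hins : insert a K = J := Finset.insert_erase haJ
      have hKss : K ⊂ J := Finset.erase_ssubset haJ
      have hI2 : I2 p (X a) (tup X K) = 0 := by
        rw [I2, hent K, ← ent_tup_insert p X a K ha, hins, hent J, ← hins,
          Finset.sum_insert ha]
        ring
      have hpair := indep_pair_of_I2_eq_zero (X a) (tup X K) hp hs hI2
      rw [← hins]
      intro f
      rw [prob_tup_insert p X a K ha f]
      have he : (insertEquiv a K ha) f
          = (f ⟨a, Finset.mem_insert_self a K⟩,
             fun i : K => f ⟨i.1, Finset.mem_insert_of_mem i.2⟩) := rfl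
      rw [he, hpair]
      rw [IH K hKss]
      rw [prod_subtype_insert a K ha (fun i => prob p (X i.1) (f i))]

/-- Transfer between the plain product tuple and the `univ`-indexed tuple. -/
def univEquiv : ((i : (Finset.univ : Finset ι)) → α i.1) ≃ (∀ i, α i) where
  toFun h i := h ⟨i, Finset.mem_univ i⟩
  invFun f i := f i.1
  left_inv h := rfl
  right_inv f := rfl

lemma prob_full_eq_tup_univ (p : Ω → ℝ) (X : ∀ i, Ω → α i) (f : ∀ i, α i) :
    prob p (fun ω i => X i ω) f
      = prob p (tup X Finset.univ) ((univEquiv (α := α)).symm f) := by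
  have := prob_comp_bij (p := p) (X := tup X Finset.univ)
    (g := ⇑(univEquiv (α := α))) (univEquiv (α := α)).bijective
    ((univEquiv (α := α)).symm f)
  rw [Equiv.apply_symm_apply] at this
  have hcomp : (fun ω => (univEquiv (α := α)) (tup X Finset.univ ω)) = fun ω i => X i ω := rfl
  rw [← hcomp]
  exact this

lemma prod_univ_subtype (F : ι → ℝ) :
    ∏ i : (Finset.univ : Finset ι), F i.1 = ∏ i : ι, F i := by
  rw [Finset.prod_coe_sort Finset.univ F]

end main

theorem stmt9 {Ω : Type*} [Fintype Ω] {n : ℕ} (hn : 2 ≤ n)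
    {α : Fin n → Type*} [∀ i, Fintype (α i)] [∀ i, DecidableEq (α i)]
    (p : Ω → ℝ) (hp : ∀ ω, 0 ≤ p ω) (hs : ∑ ω, p ω = 1)
    (X : ∀ i, Ω → α i) :
    (∀ f : ∀ i, α i, prob p (fun ω i => X i ω) f = ∏ i, prob p (X i) (f i)) ↔
      (∀ S : Finset (Fin n), 2 ≤ S.card → Imulti p X S = 0) := by
  constructor
  · intro hfull S hS
    have hfu : IndepFact p X (Finset.univ : Finset (Fin n)) := by
      intro f
      have h1 := prob_full_eq_tup_univ p X ((univEquiv (α := α)) f)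
      rw [Equiv.symm_apply_apply] at h1
      rw [← h1, hfull]
      rw [← prod_univ_subtype (fun i => prob p (X i) ((univEquiv (α := α)) f i))]
      exact Finset.prod_congr rfl fun i _ => rfl
    have hall : ∀ s : Finset (Fin n), IndepFact p X (Finset.univ \ s) := by
      intro s
      induction s using Finset.induction with
      | empty => simpa using hfu
      | insert a s ha IH =>
        have hmem : a ∈ Finset.univ \ s := Finset.mem_sdiff.mpr ⟨Finset.mem_univ a, ha⟩
        have h1 : Finset.univ \ insert a s = (Finset.univ \ s).erase a := by
          ext x
          simp only [Finset.mem_sdiff, Finset.mem_insert, Finset.mem_erase, Finset.mem_univ,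
            true_and]
          tauto
        have ha' : a ∉ Finset.univ \ insert a s := by
          rw [h1]; exact Finset.notMem_erase a _
        have h2 : insert a (Finset.univ \ insert a s) = Finset.univ \ s := by
          rw [h1, Finset.insert_erase hmem]
        refine fact_of_fact_insert p hs X a _ ha' ?_
        rw [h2]; exact IH
    have hJ : ∀ J : Finset (Fin n), IndepFact p X J := by
      intro J
      have := hall (Finset.univ \ J)
      rwa [Finset.sdiff_sdiff_self_left, Finset.univ_inter] at this
    have hent := ent_tup_eq_sum p hs X hJ
    rw [Imulti]
    have hcongr : ∀ J ∈ S.powerset,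
        (if J = ∅ then (0:ℝ) else (-1:ℝ) ^ (J.card + 1) * jointEnt p X J)
          = (if J = ∅ then (0:ℝ) else (-1:ℝ) ^ (J.card + 1) * ∑ i ∈ J, ent p (X i)) := by
      intro J _
      rcases eq_or_ne J ∅ with rfl | hne
      · simp
      · rw [if_neg hne, if_neg hne, jointEnt_eq_ent_tup, hent J]
    rw [Finset.sum_congr rfl hcongr]
    exact alt_sum_powerset _ S hS
  · intro h
    have hent := ent_of_Imulti p hs X h
    have hfact := fact_of_ent p hp hs X hent
    intro f
    rw [prob_full_eq_tup_univ p X f, hfact Finset.univ]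
    rw [← prod_univ_subtype (fun i => prob p (X i) (f i))]
    exact Finset.prod_congr rfl fun i _ => rfl
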